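/- Let G be a strongly connected digraph with a fixed start vertex s, let (x,y) be an edge inserted into G, let z = nca(x,y), and let v be a vertex that is affected by the insertion. Then the bridge-decomposition root r_v of v in G_s lies on the dominator-tree path from r_z to r_y: r_z dominates r_v and r_v dominates r_y (where r_z and r_y are the bridge-decomposition roots of z and y in G_s). -/

import Mathlib

/-!  Basic notions for finite directed graphs given by an edge set `E : Set (V × V)`. -/

variable {V : Type*}

/-- A path from `u` to `v`: a nonempty list of vertices starting at `u`, ending at `v`,
in which every pair of consecutive vertices is an edge. -/
def IsPath (E : Set (V × V)) (u v : V) (p : List V) : Prop :=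
  p.Chain' (fun a b => (a, b) ∈ E) ∧ p.head? = some u ∧ p.getLast? = some v

/-- `v` is reachable from `u` by a path. -/
def Reach (E : Set (V × V)) (u v : V) : Prop := ∃ p, IsPath E u v p

/-- Every vertex reaches every other vertex. -/
def StronglyConnected (E : Set (V × V)) : Prop := ∀ u v, Reach E u v

/-- An edge `e` is a strong bridge if its removal destroys strong connectivity. -/
def StrongBridge (E : Set (V × V)) (e : V × V) : Prop :=
  e ∈ E ∧ ¬ StronglyConnected (E \ {e})

/-- `u` dominates `v` in the flow graph with start vertex `s`:
every path from `s` to `v` contains `u`. -/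
def Dominates (E : Set (V × V)) (s u v : V) : Prop :=
  ∀ p, IsPath E s v p → u ∈ p

/-- An edge `e = (e.1, e.2)` is a bridge of the flow graph `G_s`:
every path from `s` to `e.2` contains the edge `e`. -/
def FlowBridge (E : Set (V × V)) (s : V) (e : V × V) : Prop :=
  e ∈ E ∧ ∀ p, IsPath E s e.2 p → [e.1, e.2] <:+: p

/-- The reverse digraph: all edges reversed. -/
def rev (E : Set (V × V)) : Set (V × V) := {e | (e.2, e.1) ∈ E}

/-- `D(v)`: the set of vertices dominated by `v` in `G_s`. -/
def Dset (E : Set (V × V)) (s v : V) : Set V := {w | Dominates E s v w}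

/-- Reachability inside the induced subgraph `G[S]`: a path all of whose vertices lie in `S`. -/
def ReachableIn (E : Set (V × V)) (S : Set V) (u v : V) : Prop :=
  ∃ p, IsPath E u v p ∧ ∀ w ∈ p, w ∈ S

/-- `C` is a strongly connected component of the induced subgraph `G[S]`. -/
def SCCIn (E : Set (V × V)) (S : Set V) (C : Set V) : Prop :=
  C.Nonempty ∧ C ⊆ S ∧
  (∀ u ∈ C, ∀ v ∈ C, ReachableIn E S u v) ∧
  (∀ v ∈ S, ∀ u ∈ C, ReachableIn E S u v → ReachableIn E S v u → v ∈ C)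

/-- A bridge-dominated component: an SCC of `G[D(v)]` for some bridge `(u,v)` of `G_s`. -/
def BridgeDomComponent (E : Set (V × V)) (s : V) (C : Set V) : Prop :=
  ∃ u v, FlowBridge E s (u, v) ∧ SCCIn E (Dset E s v) C

/-- The set of edges used by a path `p`. -/
def pathEdges (p : List V) : Set (V × V) := {e | [e.1, e.2] <:+: p}

/-- `u` and `v` are `2`-edge-connected: there are two edge-disjoint paths from `u` to `v`
and two edge-disjoint paths from `v` to `u`. -/
def TwoEdgeConnected (E : Set (V × V)) (u v : V) : Prop :=
  (∃ p q, IsPath E u v p ∧ IsPath E u v q ∧ pathEdges p ∩ pathEdges q = ∅) ∧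
  (∃ p q, IsPath E v u p ∧ IsPath E v u q ∧ pathEdges p ∩ pathEdges q = ∅)

/-- `u` is the immediate dominator of `v` in `G_s`: a proper dominator of `v`
dominated by every proper dominator of `v`. -/
def ImmDom (E : Set (V × V)) (s u v : V) : Prop :=
  Dominates E s u v ∧ u ≠ v ∧
  ∀ w, Dominates E s w v → w ≠ v → Dominates E s w u

/-- `depth v = |Dom(v)|`, the number of dominators of `v` in `G_s`. -/
noncomputable def depth (E : Set (V × V)) (s v : V) : ℕ :=
  {u | Dominates E s u v}.ncard

/-- `z` is the nearest common ancestor of `x` and `y` in the dominator tree of `G_s`: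
a common dominator of `x` and `y` dominated by every common dominator. -/
def IsNCA (E : Set (V × V)) (s x y z : V) : Prop :=
  Dominates E s z x ∧ Dominates E s z y ∧
  ∀ w, Dominates E s w x → Dominates E s w y → Dominates E s w z

/-- `r` is the bridge-decomposition root of `v` in `G_s`: the deepest dominator `r`
of `v` such that `r = s` or `(d(r), r)` is a bridge of `G_s`. -/
def IsBDRoot (E : Set (V × V)) (s v r : V) : Prop :=
  Dominates E s r v ∧
  (r = s ∨ ∃ u, ImmDom E s u r ∧ FlowBridge E s (u, r)) ∧
  ∀ r', Dominates E s r' v →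
    (r' = s ∨ ∃ u', ImmDom E s u' r' ∧ FlowBridge E s (u', r')) →
    Dominates E s r' r

section Aux

variable {E E' : Set (V × V)} {s u v w m a b c : V} {p q : List V}

lemma isPath_ne_nil (h : IsPath E u v p) : p ≠ [] := by
  intro h0; rw [h0] at h; simp [IsPath] at h

lemma isPath_mem_left (h : IsPath E u v p) : u ∈ p := by
  cases p with
  | nil => exact absurd rfl (isPath_ne_nil h)
  | cons a t =>
    have : a = u := by simpa using h.2.1
    simp [this]

lemma isPath_mem_right (h : IsPath E u v p) : v ∈ p := by
  have hne := isPath_ne_nil h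
  have h2 := h.2.2
  rw [List.getLast?_eq_getLast hne] at h2
  have hv : p.getLast hne = v := by simpa using h2
  rw [← hv]
  exact List.getLast_mem hne

lemma isPath_mono (hEE : E ⊆ E') (h : IsPath E u v p) : IsPath E' u v p :=
  ⟨h.1.imp (fun _ _ hab => hEE hab), h.2⟩

lemma isPath_append (h1 : IsPath E u m p) (h2 : IsPath E m v q) :
    IsPath E u v (p ++ q.tail) := by
  obtain ⟨q0, t, rfl⟩ : ∃ q0 t, q = q0 :: t := by
    cases q with
    | nil => exact absurd rfl (isPath_ne_nil h2)
    | cons a t => exact ⟨a, t, rfl⟩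
  obtain rfl : m = q0 := by
    have := h2.2.1; simp at this; exact this.symm
  refine ⟨?_, ?_, ?_⟩
  · show List.IsChain _ _
    rw [List.isChain_append]
    refine ⟨h1.1, h2.1.tail, ?_⟩
    intro a ha bb hbb
    have ham : a = m := by
      rw [h1.2.2] at ha; simpa using ha.symm
    subst ham
    cases t with
    | nil => simp at hbb
    | cons cc t' =>
      have : bb = cc := by simpa using hbb.symm
      subst this
      exact (List.isChain_cons_cons.mp h2.1).1
  · rw [List.head?_append, h1.2.1]; rfl
  · cases t with
    | nil =>
      have hmv : m = v := by simpa using h2.2.2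
      simp only [List.tail_cons, List.append_nil]
      exact hmv ▸ h1.2.2
    | cons cc t' =>
      rw [List.getLast?_append]
      have h3 : (m :: cc :: t').getLast? = (cc :: t').getLast? := List.getLast?_cons_cons
      simp only [List.tail_cons]
      rw [← h3, h2.2.2]
      rfl

lemma isPath_prefix_of_split {l₁ l₂ : List V} (h : IsPath E u v (l₁ ++ w :: l₂)) :
    IsPath E u w (l₁ ++ [w]) := by
  refine ⟨h.1.prefix ?_, ?_, List.getLast?_concat⟩
  · exact ⟨l₂, by simp⟩
  · have := h.2.1
    rw [List.head?_append] at this ⊢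
    simpa using this

lemma isPath_suffix_of_split {l₁ l₂ : List V} (h : IsPath E u v (l₁ ++ w :: l₂)) :
    IsPath E w v (w :: l₂) := by
  refine ⟨h.1.suffix ⟨l₁, rfl⟩, rfl, ?_⟩
  have h2 := h.2.2
  rw [List.getLast?_append] at h2
  rw [List.getLast?_eq_getLast (l := w :: l₂) (by simp)] at h2 ⊢
  simpa using h2

lemma exists_last_split (hw : w ∈ p) : ∃ l₁ l₂, p = l₁ ++ w :: l₂ ∧ w ∉ l₂ := by
  induction p with
  | nil => cases hw
  | cons a t ih =>
    by_cases hwt : w ∈ t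
    · obtain ⟨l₁, l₂, rfl, hnot⟩ := ih hwt
      exact ⟨a :: l₁, l₂, rfl, hnot⟩
    · have : w = a := by
        rcases List.mem_cons.mp hw with h | h
        · exact h
        · exact absurd h hwt
      exact ⟨[], t, by simp [this], hwt⟩

lemma split_suffix_last (h : IsPath E u v p) (hw : w ∈ p) :
    ∃ l₂, IsPath E w v (w :: l₂) ∧ (∀ a ∈ w :: l₂, a ∈ p) ∧ w ∉ l₂ := by
  obtain ⟨l₁, l₂, rfl, hnot⟩ := exists_last_split hw
  exact ⟨l₂, isPath_suffix_of_split h, fun a ha => by simp [ha], hnot⟩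

lemma dom_start : Dominates E s s v := fun _ hp => isPath_mem_left hp

lemma dom_self : Dominates E s v v := fun _ hp => isPath_mem_right hp

lemma not_dominates (h : ¬ Dominates E s u v) : ∃ p, IsPath E s v p ∧ u ∉ p := by
  unfold Dominates at h; push_neg at h; exact h

lemma dom_trans (hab : Dominates E s a b) (hbc : Dominates E s b c) :
    Dominates E s a c := by
  intro p hp
  obtain ⟨l₁, l₂, rfl⟩ := List.append_of_mem (hbc p hp)
  have := hab _ (isPath_prefix_of_split hp)
  rcases List.mem_append.mp this with h | h
  · simp [h]
  · simp at h; simp [h]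

lemma dom_antisym (hr : Reach E s a) (hab : Dominates E s a b)
    (hba : Dominates E s b a) : a = b := by
  obtain ⟨p0, hp0⟩ := hr
  suffices H : ∀ n, ∀ p : List V, IsPath E s a p → p.length ≤ n → a = b from
    H p0.length p0 hp0 le_rfl
  intro n
  induction n with
  | zero =>
    intro p hp hl
    have : p = [] := List.length_eq_zero_iff.mp (Nat.le_zero.mp hl)
    exact absurd this (isPath_ne_nil hp)
  | succ n ih =>
    intro p hp hl
    obtain ⟨l₁, l₂, rfl⟩ := List.append_of_mem (hba p hp)
    have hpre : IsPath E s b (l₁ ++ [b]) := isPath_prefix_of_split hp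
    have hain := hab _ hpre
    rcases List.mem_append.mp hain with h | h
    · obtain ⟨m₁, m₂, hdec⟩ := List.append_of_mem h
      rw [hdec] at hpre
      rw [List.append_assoc] at hpre
      have hpre2 : IsPath E s a (m₁ ++ [a]) := isPath_prefix_of_split (by simpa using hpre)
      apply ih (m₁ ++ [a]) hpre2
      have hlen : l₁.length = m₁.length + 1 + m₂.length := by
        have := congrArg List.length hdec
        simp [List.length_append] at this
        omega
      have hlen2 : (l₁ ++ b :: l₂).length ≤ n + 1 := hl
      simp [List.length_append] at hlen2 ⊢
      omega
    · simp at h; exact h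

end Aux
section Decomp

variable {E : Set (V × V)} {s : V} {p : List V}

lemma path_decomp {x y t : V} (hp : IsPath (insert (x, y) E) s t p) :
    IsPath E s t p ∨ ∃ p₁ p₂, IsPath (insert (x, y) E) s x p₁ ∧ IsPath E y t p₂ ∧
      p₁.length < p.length ∧ (∀ a ∈ p₁, a ∈ p) ∧ (∀ a ∈ p₂, a ∈ p) := by
  induction p generalizing s with
  | nil => exact absurd rfl (isPath_ne_nil hp)
  | cons a tl ih =>
    have has : a = s := by simpa using hp.2.1
    subst has
    by_cases hch : List.Chain' (fun c d => (c, d) ∈ E) (a :: tl)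
    · exact Or.inl ⟨hch, hp.2⟩
    obtain ⟨b, tl', rfl⟩ : ∃ b tl', tl = b :: tl' := by
      cases tl with
      | nil => exact absurd (List.isChain_singleton a) hch
      | cons b tl' => exact ⟨b, tl', rfl⟩
    have hedge : (a, b) ∈ insert (x, y) E := (List.isChain_cons_cons.mp hp.1).1
    have htl : IsPath (insert (x, y) E) b t (b :: tl') := by
      refine ⟨(List.isChain_cons_cons.mp hp.1).2, rfl, ?_⟩
      rw [← hp.2.2]; exact List.getLast?_cons_cons.symm
    by_cases hch2 : List.Chain' (fun c d => (c, d) ∈ E) (b :: tl')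
    · have hab : a = x ∧ b = y := by
        rcases Set.mem_insert_iff.mp hedge with h | h
        · exact ⟨congrArg Prod.fst h, congrArg Prod.snd h⟩
        · exact absurd (List.isChain_cons_cons.mpr ⟨h, hch2⟩) hch
      refine Or.inr ⟨[a], b :: tl', ⟨List.isChain_singleton a, rfl, by simp [hab.1]⟩,
        ⟨hch2, by simp [hab.2], htl.2.2⟩, by simp, ?_, ?_⟩
      · intro c hc; simp at hc; simp [hc]
      · intro c hc; simp [List.mem_cons] at hc ⊢; tauto
    · rcases ih htl with hG | ⟨p₁, p₂, h1, h2, hlen, hm1, hm2⟩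
      · exact absurd hG.1 hch2
      refine Or.inr ⟨a :: p₁, p₂, ⟨?_, rfl, ?_⟩, h2, ?_, ?_, ?_⟩
      · show List.IsChain _ _
        rw [List.isChain_cons]
        refine ⟨?_, h1.1⟩
        intro yy hyy
        have : yy = b := by rw [h1.2.1] at hyy; simpa using hyy.symm
        subst this
        exact hedge
      · obtain ⟨c, r, rfl⟩ : ∃ c r, p₁ = c :: r := by
          cases p₁ with
          | nil => exact absurd rfl (isPath_ne_nil h1)
          | cons c r => exact ⟨c, r, rfl⟩
        rw [List.getLast?_cons_cons]; exact h1.2.2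
      · simp only [List.length_cons] at hlen ⊢; omega
      · intro c hc
        rcases List.mem_cons.mp hc with h | h
        · simp [h]
        · have := hm1 c h; simp [List.mem_cons] at this ⊢; tauto
      · intro c hc
        have := hm2 c hc; simp [List.mem_cons] at this ⊢; tauto

lemma infix_cases {B T : List V} {a b : V} (h : [a, b] <:+: (B ++ T)) (hb : b ∉ B) :
    a ∈ T ∨ B.getLast? = some a := by
  obtain ⟨l₁, l₂, hdec⟩ := h
  induction B generalizing l₁ with
  | nil =>
    left
    have : T = l₁ ++ [a, b] ++ l₂ := by simpa using hdec.symm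
    simp [this]
  | cons c B' ih =>
    cases l₁ with
    | nil =>
      simp only [List.nil_append, List.cons_append] at hdec
      have hac : a = c := by
        have := congrArg List.head? hdec; simpa using this
      cases B' with
      | nil =>
        right; simp [hac]
      | cons d B'' =>
        exfalso
        have : b = d := by
          have := congrArg (fun l => l.tail.head?) hdec
          simpa using this
        exact hb (by simp [this])
    | cons c' l₁' =>
      simp only [List.cons_append, List.cons.injEq] at hdec
      have hb' : b ∉ B' := fun h => hb (by simp [h])
      rcases ih hb' l₁' (by simpa using hdec.2) with h | h
      · exact Or.inl h
      · right
        have hBne : B' ≠ [] := by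
          intro h0; rw [h0] at h; simp at h
        obtain ⟨d, B'', rfl⟩ : ∃ d B'', B' = d :: B'' := by
          cases B' with
          | nil => exact absurd rfl hBne
          | cons d B'' => exact ⟨d, B'', rfl⟩
        rw [List.getLast?_cons_cons]; exact h

end Decomp

section Key

variable {E : Set (V × V)} {s x y z v w dv : V}

lemma dom_insert_to_base {e : V × V} (h : Dominates (insert e E) s a b) :
    Dominates E s a b :=
  fun p hp => h p (isPath_mono (Set.subset_insert _ _) hp)

/-- M': if `w` dominates `x` in `G`, then `w` dominates in `G+(x,y)`
everything it dominates in `G`. -/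
lemma dom_insert_of_dom_x (hx : Dominates E s w x) :
    ∀ t, Dominates E s w t → Dominates (insert (x, y) E) s w t := by
  suffices H : ∀ n t, Dominates E s w t →
      ∀ p, IsPath (insert (x, y) E) s t p → p.length ≤ n → w ∈ p by
    intro t ht p hp
    exact H p.length t ht p hp le_rfl
  intro n
  induction n with
  | zero =>
    intro t ht p hp hl
    exact absurd (List.length_eq_zero_iff.mp (Nat.le_zero.mp hl)) (isPath_ne_nil hp)
  | succ n ih =>
    intro t ht p hp hl
    rcases path_decomp hp with hG | ⟨p₁, p₂, h1, h2, hlen, hm1, hm2⟩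
    · exact ht p hG
    · exact hm1 _ (ih x hx p₁ h1 (by omega))

/-- T: if `w` dominates `v` in `G+e`, `dv` dominates `v` in `G` and `w` dominates
`dv` in `G`, then `w` dominates `dv` in `G+e`. -/
lemma lemT {e : V × V} (hSC : StronglyConnected E)
    (hwv : Dominates (insert e E) s w v)
    (hdvv : Dominates E s dv v) (hwdv : Dominates E s w dv) :
    Dominates (insert e E) s w dv := by
  by_cases hwd : w = dv
  · subst hwd; exact fun _ hp => isPath_mem_right hp
  have hT : ∃ T, IsPath E dv v T ∧ w ∉ T := by
    by_contra hcon
    push_neg at hcon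
    have hndw : ¬ Dominates E s dv w := by
      intro hdw
      exact hwd (dom_antisym (hSC s w) hwdv hdw)
    obtain ⟨C, hC, hdvC⟩ := not_dominates hndw
    have hwvdv : ∀ U, IsPath E w v U → dv ∈ U := by
      intro U hU
      by_contra hdvU
      have hcat := isPath_append hC hU
      rcases List.mem_append.mp (hdvv _ hcat) with h | h
      · exact hdvC h
      · exact hdvU (List.mem_of_mem_tail h)
    obtain ⟨P, hP⟩ := hSC s v
    obtain ⟨l₂, hq, hmem, hlast⟩ := split_suffix_last hP (hdvv P hP)
    have hw2 : w ∈ l₂ := by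
      rcases List.mem_cons.mp (hcon _ hq) with h | h
      · exact absurd h hwd
      · exact h
    obtain ⟨m₁, m₂, rfl⟩ := List.append_of_mem hw2
    have hsuf : IsPath E w v (w :: m₂) :=
      isPath_suffix_of_split (l₁ := dv :: m₁) (l₂ := m₂) (by simpa using hq)
    rcases List.mem_cons.mp (hwvdv _ hsuf) with h | h
    · exact hwd h.symm
    · exact hlast (by simp [h])
  obtain ⟨T, hT, hwT⟩ := hT
  intro p hp
  by_contra hwp
  have hcat := isPath_append hp (isPath_mono (Set.subset_insert _ _) hT)
  rcases List.mem_append.mp (hwv _ hcat) with h | h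
  · exact hwp h
  · exact hwT (List.mem_of_mem_tail h)

/-- N*: if `z = nca(x,y)` does not dominate `v` and `dv` dominates `v` in `G`,
then `dv` still dominates `v` in `G+(x,y)`. -/
lemma lemN (hSC : StronglyConnected E) (hz : IsNCA E s x y z)
    (hnzv : ¬ Dominates E s z v) (hdvv : Dominates E s dv v) :
    Dominates (insert (x, y) E) s dv v := by
  intro p hp
  rcases path_decomp hp with hG | ⟨p₁, p₂, h1, h2, hlen, hm1, hm2⟩
  · exact hdvv p hG
  by_cases hdvp2 : dv ∈ p₂
  · exact hm2 _ hdvp2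
  have hdvy : Dominates E s dv y := by
    intro S hS
    rcases List.mem_append.mp (hdvv _ (isPath_append hS h2)) with h | h
    · exact h
    · exact absurd (List.mem_of_mem_tail h) hdvp2
  by_cases hdvx : Dominates E s dv x
  · exact hm1 _ (dom_insert_of_dom_x hdvx x hdvx p₁ h1)
  exfalso
  obtain ⟨C, hC, hzC⟩ := not_dominates hnzv
  obtain ⟨l₁, l₂, rfl⟩ := List.append_of_mem (hdvv C hC)
  have hC1 : IsPath E s dv (l₁ ++ [dv]) := isPath_prefix_of_split hC
  have hzC1 : z ∉ l₁ ++ [dv] := by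
    intro hm
    apply hzC
    rcases List.mem_append.mp hm with h | h
    · simp [h]
    · simp at h; simp [h]
  have hzdv : z ≠ dv := by
    intro h0; exact hzC1 (by simp [h0])
  have fact1 : ∀ T, IsPath E dv y T → z ∈ T := by
    intro T hT
    rcases List.mem_append.mp (hz.2.1 _ (isPath_append hC1 hT)) with h | h
    · exact absurd h hzC1
    · exact List.mem_of_mem_tail h
  by_cases hdvz : Dominates E s dv z
  · apply hdvx
    intro Q hQ
    obtain ⟨q₁, q₂, rfl⟩ := List.append_of_mem (hz.1 Q hQ)
    have := hdvz _ (isPath_prefix_of_split hQ)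
    rcases List.mem_append.mp this with h | h
    · simp [h]
    · simp at h; simp [h]
  obtain ⟨D, hD, hdvD⟩ := not_dominates hdvz
  have fact2 : ∀ S, IsPath E z y S → dv ∈ S := by
    intro S hS
    rcases List.mem_append.mp (hdvy _ (isPath_append hD hS)) with h | h
    · exact absurd h hdvD
    · exact List.mem_of_mem_tail h
  obtain ⟨S0, hS0⟩ := hSC z y
  obtain ⟨l₂', hq, hmem, hlast⟩ := split_suffix_last hS0 (fact2 S0 hS0)
  have hz3 : z ∈ l₂' := by
    rcases List.mem_cons.mp (fact1 _ hq) with h | h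
    · exact absurd h hzdv
    · exact h
  obtain ⟨m₁, m₂, rfl⟩ := List.append_of_mem hz3
  have hS3 : IsPath E z y (z :: m₂) :=
    isPath_suffix_of_split (l₁ := dv :: m₁) (l₂ := m₂) (by simpa using hq)
  rcases List.mem_cons.mp (fact2 _ hS3) with h | h
  · exact hzdv h.symm
  · exact hlast (by simp [h])

end Key

section L2

variable {E : Set (V × V)} {s x y v dv rv : V}

/-- L2: if `rv` (the BD root of `v`) does not dominate `y`, then the insertion of
`(x,y)` does not affect `v`. -/
lemma lemL2 (hSC : StronglyConnected E) (hdv : ImmDom E s dv v)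
    (hrv : IsBDRoot E s v rv) (hnry : ¬ Dominates E s rv y) :
    ImmDom (insert (x, y) E) s dv v := by
  refine ⟨?_, hdv.2.1, ?_⟩
  swap
  · intro w hw hwne
    exact lemT hSC hw hdv.1 (hdv.2.2 w (dom_insert_to_base hw) hwne)
  rcases hrv.2.1 with hs | ⟨u, hu, hbr⟩
  · exact absurd (hs ▸ (dom_start : Dominates E s s y)) hnry
  obtain ⟨B, hB, hrvB⟩ := not_dominates hnry
  by_cases hrvv : rv = v
  · subst hrvv
    have hudv : u = dv :=
      dom_antisym (hSC s u) (hdv.2.2 u hu.1 hu.2.1) (hu.2.2 dv hdv.1 hdv.2.1)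
    intro p hp
    rcases path_decomp hp with hG | ⟨p₁, p₂, h1, h2, hlen, hm1, hm2⟩
    · exact hdv.1 p hG
    have hcat := isPath_append hB h2
    have hinf : [u, rv] <:+: (B ++ p₂.tail) := hbr.2 _ hcat
    rcases infix_cases hinf hrvB with hmem | hlast
    · apply hm2
      rw [← hudv]
      exact List.mem_of_mem_tail hmem
    · have huy : u = y := by
        rw [hB.2.2] at hlast
        simpa using hlast.symm
      apply hm2
      rw [← hudv, huy]
      exact isPath_mem_left h2
  · have hrvdv : Dominates E s rv dv := hdv.2.2 rv hrv.1 hrvv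
    intro p hp
    rcases path_decomp hp with hG | ⟨p₁, p₂, h1, h2, hlen, hm1, hm2⟩
    · exact hdv.1 p hG
    have hcat := isPath_append hB h2
    have hrvp2 : rv ∈ p₂ := by
      rcases List.mem_append.mp (hrv.1 _ hcat) with h | h
      · exact absurd h hrvB
      · exact List.mem_of_mem_tail h
    obtain ⟨m₁, m₂, hm⟩ := List.append_of_mem hrvp2
    have hR2 : IsPath E rv v (rv :: m₂) := isPath_suffix_of_split (hm ▸ h2)
    by_cases hdvR : dv ∈ rv :: m₂
    · apply hm2
      rw [hm]
      rcases List.mem_cons.mp hdvR with h | h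
      · simp [h]
      · simp [h]
    · exfalso
      have hdvrv : Dominates E s dv rv := by
        intro S hS
        rcases List.mem_append.mp (hdv.1 _ (isPath_append hS hR2)) with h | h
        · exact h
        · exact absurd (List.mem_of_mem_tail h) hdvR
      have : dv = rv := dom_antisym (hSC s dv) hdvrv hrvdv
      exact hdvR (this ▸ List.mem_cons_self (a := dv) (l := m₂))

end L2

/-- if `v` is affected by the insertion of `(x,y)` and `z = nca(x,y)`,
then the bridge-decomposition root `rv` of `v` lies on the dominator-tree path from
`rz` to `ry`: `rz` dominates `rv` and `rv` dominates `ry`. -/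
theorem stmt10 {V : Type*} (E : Set (V × V)) (s x y z v dv rv rz ry : V)
    (hSC : StronglyConnected E)
    (hz : IsNCA E s x y z)
    (hdv : ImmDom E s dv v)
    (haff : ¬ ImmDom (insert (x, y) E) s dv v)
    (hrv : IsBDRoot E s v rv) (hrz : IsBDRoot E s z rz) (hry : IsBDRoot E s y ry) :
    Dominates E s rz rv ∧ Dominates E s rv ry := by
  have hzv : Dominates E s z v := by
    by_contra hnzv
    exact haff ⟨lemN hSC hz hnzv hdv.1, hdv.2.1,
      fun w hw hwne => lemT hSC hw hdv.1 (hdv.2.2 w (dom_insert_to_base hw) hwne)⟩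
  have hrvy : Dominates E s rv y := by
    by_contra hnry
    exact haff (lemL2 hSC hdv hrv hnry)
  exact ⟨hrv.2.2 rz (dom_trans hrz.1 hzv) hrz.2.1, hry.2.2 rv hrvy hrv.2.1⟩
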